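/- Let P be a simple convex polytope of dimension n ≥ 3 all of whose coefficients h_i of the h-polynomial are nonnegative and palindromic (h_i = h_{n−i}). Then the average number of vertices of the 2-dimensional faces of P satisfies A^{0,2} = (number of vertex–2-face incident pairs)/(number of 2-faces) ≤ 4 + 4/(n−2). -/
import Mathlib


/-- For a simple polytope of dimension n ≥ 3 with nonnegative palindromic
h-vector, the average number of vertices of 2-dimensional faces satisfies
A^{0,2} = α₀·C(n,2)/α₂ ≤ 4 + 4/(n−2). Here α_i = Σ_j C(j,i) h_j are the face
numbers, and the number of (vertex, 2-face) incidences is α₀·C(n,2) since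
every vertex of a simple polytope lies in exactly C(n,2) two-faces. -/
theorem average_vertices_of_two_faces (n : ℕ) (hn : 3 ≤ n) (h : ℕ → ℝ)
    (hnn : ∀ i, 0 ≤ h i)
    (hpal : ∀ i ≤ n, h i = h (n - i))
    (hne : ∃ j ≤ n, 0 < h j)
    (α : ℕ → ℝ)
    (hα : ∀ i, α i = ∑ j ∈ Finset.range (n + 1), (j.choose i : ℝ) * h j) :
    α 0 * (n.choose 2 : ℝ) / α 2 ≤ 4 + 4 / ((n : ℝ) - 2) := by
  have hn2 : (2:ℝ) < (n:ℝ) := by exact_mod_cast (by omega : 2 < n)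
  have hα0 : α 0 = ∑ j ∈ Finset.range (n + 1), h j := by
    rw [hα]; simp
  have hα0pos : 0 < α 0 := by
    obtain ⟨j, hj, hjpos⟩ := hne
    rw [hα0]
    exact Finset.sum_pos' (fun i _ => hnn i)
      ⟨j, Finset.mem_range.mpr (by omega), hjpos⟩
  -- reflected expression for α 2
  have hrefl : α 2 = ∑ j ∈ Finset.range (n + 1), ((n - j).choose 2 : ℝ) * h j := by
    rw [hα 2, ← Finset.sum_range_reflect (fun j => ((j.choose 2 : ℝ) * h j)) (n+1)]
    apply Finset.sum_congr rfl
    intro j hj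
    have hj' : j ≤ n := by
      have := Finset.mem_range.mp hj; omega
    have e : n + 1 - 1 - j = n - j := by omega
    rw [e, ← hpal j hj']
  -- per-term inequality
  have key : ∀ j ≤ n, (n:ℝ) * ((n:ℝ) - 2) / 4 ≤
      (j.choose 2 : ℝ) + ((n - j).choose 2 : ℝ) := by
    intro j hj
    have hcast : ((n - j : ℕ) : ℝ) = (n:ℝ) - (j:ℝ) := by
      rw [Nat.cast_sub hj]
    rw [Nat.cast_choose_two, Nat.cast_choose_two, hcast]
    nlinarith [sq_nonneg (2*(j:ℝ) - (n:ℝ))]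
  -- summed inequality : n(n-2)/4 * α0 ≤ 2 α2
  have hsum : (n:ℝ) * ((n:ℝ) - 2) / 4 * α 0 ≤ 2 * α 2 := by
    have : 2 * α 2 = ∑ j ∈ Finset.range (n + 1),
        (((j.choose 2 : ℝ)) + ((n - j).choose 2 : ℝ)) * h j := by
      nth_rewrite 1 [two_mul]
      nth_rewrite 1 [hα 2]
      rw [hrefl, ← Finset.sum_add_distrib]
      apply Finset.sum_congr rfl
      intro j _; ring
    rw [this, hα0, Finset.mul_sum]
    apply Finset.sum_le_sum
    intro j hj
    have hj' : j ≤ n := by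
      have := Finset.mem_range.mp hj; omega
    exact mul_le_mul_of_nonneg_right (key j hj') (hnn j)
  have hα2pos : 0 < α 2 := by
    have := mul_pos (show (0:ℝ) < (n:ℝ) * ((n:ℝ) - 2) / 4 by nlinarith) hα0pos
    linarith
  have hne2 : ((n:ℝ) - 2) ≠ 0 := by linarith
  rw [div_le_iff₀ hα2pos, Nat.cast_choose_two]
  have h4 : 4 + 4 / ((n:ℝ) - 2) = 4 * ((n:ℝ) - 1) / ((n:ℝ) - 2) := by
    field_simp
    ring
  rw [h4, div_mul_eq_mul_div, le_div_iff₀ (by linarith : (0:ℝ) < (n:ℝ) - 2)]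
  nlinarith [mul_le_mul_of_nonneg_left hsum (show (0:ℝ) ≤ (n:ℝ) - 1 by linarith)]
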